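/- Let (X,S,T) be a distal minimal system with commuting transformations S and T, and let R be either S or T. If (x,y) ∈ Q_R(X) and (y,z) ∈ Q_R(X), then (x,z) ∈ Q_R(X). Consequently Q_R(X) is a closed equivalence relation on X. -/

import Mathlib

open Filter Topology


/-- The `n`-th integer iterate of a homeomorphism, as a function. -/
def hpow {X : Type*} [TopologicalSpace X] (S : X ≃ₜ X) (n : ℤ) : X → X :=
  ⇑(S.toEquiv ^ n)

variable {X : Type*} [TopologicalSpace X]

def cube (S T : X ≃ₜ X) : Set (X × X × X × X) :=
  closure {p | ∃ (x : X) (n m : ℤ),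
    p = (x, hpow S n x, hpow T m x, hpow S n (hpow T m x))}

def cube2 (S : X ≃ₜ X) : Set (X × X) :=
  closure {p | ∃ (x : X) (n : ℤ), p = (x, hpow S n x)}

def relS (S T : X ≃ₜ X) : Set (X × X) :=
  {p | ∃ a : X, (p.1, p.2, a, a) ∈ cube S T}

def relT (S T : X ≃ₜ X) : Set (X × X) :=
  {p | ∃ b : X, (p.1, b, p.2, b) ∈ cube S T}

def minimalST (S T : X ≃ₜ X) : Prop :=
  ∀ x : X, Dense {y : X | ∃ n m : ℤ, y = hpow S n (hpow T m x)}

def minimal1 (S : X ≃ₜ X) : Prop :=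
  ∀ x : X, Dense {y : X | ∃ n : ℤ, y = hpow S n x}

def distalST {Y : Type*} [MetricSpace Y] (S T : Y ≃ₜ Y) : Prop :=
  ∀ x y : Y, x ≠ y → ∃ ε > 0, ∀ n m : ℤ,
    ε ≤ dist (hpow S n (hpow T m x)) (hpow S n (hpow T m y))

def proxT {Y : Type*} [MetricSpace Y] (T : Y ≃ₜ Y) : Set (Y × Y) :=
  {p | ∀ ε > 0, ∃ m : ℤ, dist (hpow T m p.1) (hpow T m p.2) < ε}



lemma hpow_add (S : X ≃ₜ X) (n m : ℤ) (x : X) :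
    hpow S n (hpow S m x) = hpow S (n + m) x := by
  simp [hpow, zpow_add]

lemma hpow_zero (S : X ≃ₜ X) (x : X) : hpow S 0 x = x := rfl

lemma continuous_hpow (S : X ≃ₜ X) (n : ℤ) : Continuous (hpow S n) := by
  induction n using Int.induction_on with
  | zero => simpa [hpow] using continuous_id
  | succ k ih =>
      have h : ∀ x, hpow S (k + 1) x = hpow S k (S x) := by
        intro x; simp [hpow, zpow_add]
      rw [show hpow S (k+1) = fun x => hpow S k (S x) from funext h]
      exact ih.comp S.continuous
  | pred k ih =>
      have h : ∀ x, hpow S (-k - 1) x = hpow S (-k) (S.symm x) := by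
        intro x
        simp [hpow, zpow_sub, sub_eq_add_neg, zpow_add]
      rw [show hpow S (-k-1) = fun x => hpow S (-k) (S.symm x) from funext h]
      exact ih.comp S.symm.continuous

lemma hpow_comm {S T : X ≃ₜ X} (h : ∀ x, S (T x) = T (S x)) (n m : ℤ) (x : X) :
    hpow S n (hpow T m x) = hpow T m (hpow S n x) := by
  have hc : Commute S.toEquiv T.toEquiv := Equiv.ext h
  have := (hc.zpow_zpow n m).eq
  calc hpow S n (hpow T m x) = (S.toEquiv ^ n * T.toEquiv ^ m) x := rfl
    _ = (T.toEquiv ^ m * S.toEquiv ^ n) x := by rw [this]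
    _ = hpow T m (hpow S n x) := rfl

open Filter Topology in

open Filter Topology

/-- In a compact distal setting, orbit-closure membership is symmetric:
if `q` is in the closure of the `M`-orbit of `p`, then `p` is in the closure of
the `M`-orbit of `q`. -/
theorem distal_return {Y : Type*} [MetricSpace Y] [CompactSpace Y]
    (M : Set (Y → Y)) (hMc : ∀ f ∈ M, Continuous f)
    (hcomp : ∀ f ∈ M, ∀ g ∈ M, f ∘ g ∈ M) (hne : M.Nonempty)
    (hdist : ∀ a b : Y, a ≠ b → ∃ ε > 0, ∀ f ∈ M, ε ≤ dist (f a) (f b))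
    (p q : Y) (hq : q ∈ closure ((fun f => f p) '' M)) :
    p ∈ closure ((fun f => f q) '' M) := by
  classical
  set E : Set (Y → Y) := closure M with hE
  -- composing with a continuous map on the left stays in E
  have step1 : ∀ f ∈ M, ∀ u ∈ E, f ∘ u ∈ E := by
    intro f hf u hu
    have hΦ : Continuous fun u : Y → Y => f ∘ u :=
      continuous_pi fun x => (hMc f hf).comp (continuous_apply x)
    have : (fun u : Y → Y => f ∘ u) u ∈ closure ((fun u : Y → Y => f ∘ u) '' M) :=
      (image_closure_subset_closure_image hΦ) ⟨u, hu, rfl⟩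
    refine closure_mono ?_ this
    rintro _ ⟨g, hg, rfl⟩
    exact hcomp f hf g hg
  have hEcomp : ∀ u ∈ E, ∀ v ∈ E, u ∘ v ∈ E := by
    intro u hu v hv
    have hΨ : Continuous fun w : Y → Y => w ∘ v :=
      continuous_pi fun x => continuous_apply (v x)
    have : (fun w : Y → Y => w ∘ v) u ∈ closure ((fun w : Y → Y => w ∘ v) '' M) :=
      (image_closure_subset_closure_image hΨ) ⟨u, hu, rfl⟩
    have himg : closure ((fun w : Y → Y => w ∘ v) '' M) ⊆ E := by
      have : (fun w : Y → Y => w ∘ v) '' M ⊆ E := by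
        rintro _ ⟨g, hg, rfl⟩
        exact step1 g hg v hv
      simpa [hE] using closure_minimal this isClosed_closure
    exact himg this
  have hEcompact : IsCompact E := isClosed_closure.isCompact
  have hEne : E.Nonempty := hne.mono subset_closure
  -- every element of E is injective
  have hEinj : ∀ u ∈ E, Function.Injective u := by
    intro u hu a b hab
    by_contra hne'
    obtain ⟨ε, hε, hεd⟩ := hdist a b hne'
    have hC : u ∈ {w : Y → Y | ε ≤ dist (w a) (w b)} := by
      have hcl : IsClosed {w : Y → Y | ε ≤ dist (w a) (w b)} := by
        have : Continuous fun w : Y → Y => dist (w a) (w b) :=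
          Continuous.dist (continuous_apply a) (continuous_apply b)
        exact isClosed_le continuous_const this
      exact closure_minimal (fun f hf => hεd f hf) hcl hu
    have : ε ≤ dist (u a) (u b) := hC
    rw [hab, dist_self] at this
    linarith
  -- evaluation image of E equals closure of orbit
  have hev : ∀ r : Y, (fun u : Y → Y => u r) '' E = closure ((fun f => f r) '' M) := by
    intro r
    apply Set.Subset.antisymm
    · have := image_closure_subset_closure_image (f := fun u : Y → Y => u r)
        (continuous_apply r) (s := M)
      simpa [hE] using this
    · refine closure_minimal (Set.image_mono subset_closure)
        ((hEcompact.image (continuous_apply r)).isClosed)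
  obtain ⟨u, hu, hup⟩ : ∃ u ∈ E, u p = q := by
    have := (hev p).symm ▸ hq
    obtain ⟨u, hu, h⟩ := this
    exact ⟨u, hu, h⟩
  -- find a left inverse of u inside E using an idempotent
  letI : Mul (Y → Y) := ⟨fun f g => f ∘ g⟩
  letI : Semigroup (Y → Y) := ⟨fun _ _ _ => rfl⟩
  have hmull : ∀ r : Y → Y, Continuous (· * r) := fun r =>
    continuous_pi fun x => continuous_apply (r x)
  have hKsub : ∀ᵉ (a ∈ (fun w : Y → Y => w ∘ u) '' E) (b ∈ (fun w : Y → Y => w ∘ u) '' E),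
      a * b ∈ (fun w : Y → Y => w ∘ u) '' E := by
    rintro _ ⟨w, hw, rfl⟩ _ ⟨w', hw', rfl⟩
    exact ⟨w ∘ u ∘ w', hEcomp w hw _ (hEcomp u hu w' hw'), rfl⟩
  obtain ⟨e, he, hee⟩ := exists_idempotent_in_compact_subsemigroup hmull
    ((fun w : Y → Y => w ∘ u) '' E) (hEne.image _)
    (hEcompact.image (hmull u)) hKsub
  obtain ⟨v, hv, hvu⟩ := he
  have heE : e ∈ E := hvu ▸ hEcomp v hv u hu
  have heid : ∀ x, e x = x := by
    intro x
    have : e (e x) = e x := congrFun hee x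
    exact hEinj e heE this
  have hvq : v q = p := by
    have h1 : v ∘ u = e := hvu
    have : (v ∘ u) p = p := by rw [h1]; exact heid p
    simpa [hup] using this
  rw [← hev q]
  exact ⟨v, hv, hvq⟩

theorem stmt9 {X : Type*} [MetricSpace X] [CompactSpace X] (S T : X ≃ₜ X)
    (hST : ∀ x, S (T x) = T (S x)) (hmin : minimalST S T) (hd : distalST S T)
    (R : X ≃ₜ X) (hR : R = S ∨ R = T) :
    (∀ x y z : X, (x, y) ∈ cube2 R → (y, z) ∈ cube2 R → (x, z) ∈ cube2 R) ∧
    IsClosed (cube2 R) ∧ Equivalence (fun x y : X => (x, y) ∈ cube2 R) := by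
    classical
  set σ : ℤ → ℤ → X → X := fun i j x => hpow S i (hpow T j x) with hσ
  set ρ : ℤ → X → X := fun n x => hpow R n x with hρ
  have hTS : ∀ x, T (S x) = S (T x) := fun x => (hST x).symm
  have hcomSR : ∀ x, S (R x) = R (S x) := by
    rcases hR with h | h
    · exact fun x => by rw [h]
    · exact fun x => by rw [h]; exact hST x
  have hcomTR : ∀ x, T (R x) = R (T x) := by
    rcases hR with h | h
    · exact fun x => by rw [h]; exact hTS x
    · exact fun x => by rw [h]
  have sigma_cont : ∀ i j, Continuous (σ i j) := fun i j =>
    (continuous_hpow S i).comp (continuous_hpow T j)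
  have rho_cont : ∀ n, Continuous (ρ n) := fun n => continuous_hpow R n
  have sigma_comp : ∀ i j i' j' x, σ i j (σ i' j' x) = σ (i + i') (j + j') x := by
    intro i j i' j' x
    show hpow S i (hpow T j (hpow S i' (hpow T j' x))) = _
    rw [hpow_comm hTS j i' (hpow T j' x), hpow_add S i i', hpow_add T j j']
  have rho_sigma : ∀ i j n x, ρ n (σ i j x) = σ i j (ρ n x) := by
    intro i j n x
    show hpow R n (hpow S i (hpow T j x)) = hpow S i (hpow T j (hpow R n x))
    rw [hpow_comm (fun x => (hcomSR x).symm) n i, hpow_comm (fun x => (hcomTR x).symm) n j]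
  have collapse : ∀ i j n, ∃ i' j', ∀ x, σ i j (ρ n x) = hpow S i' (hpow T j' x) := by
    intro i j n
    rcases hR with h | h
    · refine ⟨i + n, j, fun x => ?_⟩
      show hpow S i (hpow T j (hpow R n x)) = _
      rw [h, hpow_comm hTS j n x, hpow_add S i n]
    · refine ⟨i, j + n, fun x => ?_⟩
      show hpow S i (hpow T j (hpow R n x)) = _
      rw [h, hpow_add T j n]
  -- invariance of cube2
  set base2 : Set (X × X) := {p | ∃ (x : X) (n : ℤ), p = (x, hpow R n x)} with hbase2
  have hcube2 : cube2 R = closure base2 := rfl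
  have mapsto : ∀ (Φ : X × X → X × X), Continuous Φ →
      (∀ x n, Φ (x, hpow R n x) ∈ cube2 R) →
      ∀ p ∈ cube2 R, Φ p ∈ cube2 R := by
    intro Φ hc hbase p hp
    have h1 : Φ p ∈ closure (Φ '' base2) :=
      image_closure_subset_closure_image hc ⟨p, hp, rfl⟩
    have h2 : closure (Φ '' base2) ⊆ cube2 R := by
      rw [hcube2]
      refine closure_minimal ?_ isClosed_closure
      rintro _ ⟨_, ⟨x, n, rfl⟩, rfl⟩
      exact hbase x n
    exact h2 h1
  have inv_g : ∀ (i j : ℤ) (a b : X), (a, b) ∈ cube2 R →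
      (σ i j a, σ i j b) ∈ cube2 R := by
    intro i j a b h
    refine mapsto (Prod.map (σ i j) (σ i j))
      ((sigma_cont i j).prodMap (sigma_cont i j)) ?_ _ h
    intro x n
    refine subset_closure ⟨σ i j x, n, ?_⟩
    have : σ i j (hpow R n x) = hpow R n (σ i j x) := (rho_sigma i j n x).symm
    simp only [Prod.map, this]
  have inv_R : ∀ (m : ℤ) (a b : X), (a, b) ∈ cube2 R →
      (a, hpow R m b) ∈ cube2 R := by
    intro m a b h
    refine mapsto (Prod.map id (hpow R m))
      (continuous_id.prodMap (rho_cont m)) ?_ _ h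
    intro x n
    refine subset_closure ⟨x, m + n, ?_⟩
    simp only [Prod.map, id, hpow_add]
  have rho_add : ∀ n n' x, ρ n (ρ n' x) = ρ (n + n') x := fun n n' x => hpow_add R n n' x
  have hclosed : IsClosed (cube2 R) := hcube2 ▸ isClosed_closure
  -- the pair system
  set g2 : ℤ → ℤ → ℤ → X × X → X × X :=
    fun i j n p => (σ i j p.1, σ i j (ρ n p.2)) with hg2
  set M2 : Set (X × X → X × X) := {F | ∃ i j n, F = g2 i j n} with hM2
  have hM2c : ∀ F ∈ M2, Continuous F := by
    rintro _ ⟨i, j, n, rfl⟩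
    exact ((sigma_cont i j).comp continuous_fst).prodMk
      ((sigma_cont i j).comp ((rho_cont n).comp continuous_snd))
  have g2_comp : ∀ i j n i' j' n',
      g2 i j n ∘ g2 i' j' n' = g2 (i + i') (j + j') (n + n') := by
    intro i j n i' j' n'
    funext p
    show (σ i j (σ i' j' p.1), σ i j (ρ n (σ i' j' (ρ n' p.2)))) = _
    rw [sigma_comp, rho_sigma, sigma_comp, rho_add]
  have hM2comp : ∀ F ∈ M2, ∀ G ∈ M2, F ∘ G ∈ M2 := by
    rintro _ ⟨i, j, n, rfl⟩ _ ⟨i', j', n', rfl⟩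
    exact ⟨i + i', j + j', n + n', g2_comp i j n i' j' n'⟩
  have hM2ne : M2.Nonempty := ⟨g2 0 0 0, 0, 0, 0, rfl⟩
  have dle1 : ∀ a b a' b' : X, dist a a' ≤ dist ((a, b) : X × X) (a', b') := by
    intro a b a' b'; rw [Prod.dist_eq]; exact le_max_left _ _
  have dle2 : ∀ a b a' b' : X, dist b b' ≤ dist ((a, b) : X × X) (a', b') := by
    intro a b a' b'; rw [Prod.dist_eq]; exact le_max_right _ _
  have hM2d : ∀ P Q : X × X, P ≠ Q → ∃ ε > 0, ∀ F ∈ M2, ε ≤ dist (F P) (F Q) := by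
    intro P Q hPQ
    have hsplit : P.1 ≠ Q.1 ∨ P.2 ≠ Q.2 := by
      by_contra h
      push_neg at h
      exact hPQ (Prod.ext h.1 h.2)
    rcases hsplit with h | h
    · obtain ⟨ε, hε, he⟩ := hd P.1 Q.1 h
      refine ⟨ε, hε, ?_⟩
      rintro _ ⟨i, j, n, rfl⟩
      exact le_trans (he i j) (dle1 _ _ _ _)
    · obtain ⟨ε, hε, he⟩ := hd P.2 Q.2 h
      refine ⟨ε, hε, ?_⟩
      rintro _ ⟨i, j, n, rfl⟩
      obtain ⟨i2, j2, hcol⟩ := collapse i j n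
      have : ε ≤ dist (σ i j (ρ n P.2)) (σ i j (ρ n Q.2)) := by
        rw [hcol, hcol]; exact he i2 j2
      exact le_trans this (dle2 _ _ _ _)
  -- cube2 is contained in the orbit closure of any diagonal point
  have horb : ∀ y : X, cube2 R ⊆ closure ((fun F => F ((y, y) : X × X)) '' M2) := by
    intro y
    rw [hcube2]
    refine closure_minimal ?_ isClosed_closure
    rintro _ ⟨w, n, rfl⟩
    have hw : w ∈ closure {u : X | ∃ i j : ℤ, u = hpow S i (hpow T j y)} := hmin y w
    have hφ : Continuous fun u : X => (u, hpow R n u) :=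
      continuous_id.prodMk (rho_cont n)
    have h1 : (w, hpow R n w) ∈
        closure ((fun u : X => (u, hpow R n u)) ''
          {u : X | ∃ i j : ℤ, u = hpow S i (hpow T j y)}) :=
      image_closure_subset_closure_image hφ ⟨w, hw, rfl⟩
    refine closure_mono ?_ h1
    rintro _ ⟨_, ⟨i, j, rfl⟩, rfl⟩
    refine ⟨g2 i j n, ⟨i, j, n, rfl⟩, ?_⟩
    show (σ i j y, σ i j (ρ n y)) = (σ i j y, hpow R n (σ i j y))
    rw [← rho_sigma]
  -- the triple system
  set g3 : ℤ → ℤ → ℤ → X × X × X → X × X × X :=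
    fun i j n p => (σ i j p.1, σ i j p.2.1, σ i j (ρ n p.2.2)) with hg3
  set M3 : Set (X × X × X → X × X × X) := {F | ∃ i j n, F = g3 i j n} with hM3
  have hM3c : ∀ F ∈ M3, Continuous F := by
    rintro _ ⟨i, j, n, rfl⟩
    exact ((sigma_cont i j).comp continuous_fst).prodMk
      (((sigma_cont i j).comp (continuous_fst.comp continuous_snd)).prodMk
        ((sigma_cont i j).comp ((rho_cont n).comp (continuous_snd.comp continuous_snd))))
  have hM3comp : ∀ F ∈ M3, ∀ G ∈ M3, F ∘ G ∈ M3 := by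
    rintro _ ⟨i, j, n, rfl⟩ _ ⟨i', j', n', rfl⟩
    refine ⟨i + i', j + j', n + n', ?_⟩
    funext p
    show (σ i j (σ i' j' p.1), σ i j (σ i' j' p.2.1),
      σ i j (ρ n (σ i' j' (ρ n' p.2.2)))) = _
    rw [sigma_comp, sigma_comp, rho_sigma, sigma_comp, rho_add]
  have hM3ne : M3.Nonempty := ⟨g3 0 0 0, 0, 0, 0, rfl⟩
  have tle1 : ∀ a b c a' b' c' : X,
      dist a a' ≤ dist ((a, b, c) : X × X × X) (a', b', c') := by
    intro a b c a' b' c'; rw [Prod.dist_eq]; exact le_max_left _ _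
  have tle2 : ∀ a b c a' b' c' : X,
      dist b b' ≤ dist ((a, b, c) : X × X × X) (a', b', c') := by
    intro a b c a' b' c'; rw [Prod.dist_eq, Prod.dist_eq]
    exact le_trans (le_max_left _ _) (le_max_right _ _)
  have tle3 : ∀ a b c a' b' c' : X,
      dist c c' ≤ dist ((a, b, c) : X × X × X) (a', b', c') := by
    intro a b c a' b' c'; rw [Prod.dist_eq, Prod.dist_eq]
    exact le_trans (le_max_right _ _) (le_max_right _ _)
  have hM3d : ∀ P Q : X × X × X, P ≠ Q → ∃ ε > 0, ∀ F ∈ M3, ε ≤ dist (F P) (F Q) := by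
    intro P Q hPQ
    have hsplit : P.1 ≠ Q.1 ∨ P.2.1 ≠ Q.2.1 ∨ P.2.2 ≠ Q.2.2 := by
      by_contra h
      push_neg at h
      exact hPQ (Prod.ext h.1 (Prod.ext h.2.1 h.2.2))
    rcases hsplit with h | h | h
    · obtain ⟨ε, hε, he⟩ := hd P.1 Q.1 h
      refine ⟨ε, hε, ?_⟩
      rintro _ ⟨i, j, n, rfl⟩
      exact le_trans (he i j) (tle1 _ _ _ _ _ _)
    · obtain ⟨ε, hε, he⟩ := hd P.2.1 Q.2.1 h
      refine ⟨ε, hε, ?_⟩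
      rintro _ ⟨i, j, n, rfl⟩
      exact le_trans (he i j) (tle2 _ _ _ _ _ _)
    · obtain ⟨ε, hε, he⟩ := hd P.2.2 Q.2.2 h
      refine ⟨ε, hε, ?_⟩
      rintro _ ⟨i, j, n, rfl⟩
      obtain ⟨i2, j2, hcol⟩ := collapse i j n
      have : ε ≤ dist (σ i j (ρ n P.2.2)) (σ i j (ρ n Q.2.2)) := by
        rw [hcol, hcol]; exact he i2 j2
      exact le_trans this (tle3 _ _ _ _ _ _)
  -- main transitivity
  have main : ∀ x y z : X, (x, y) ∈ cube2 R → (y, z) ∈ cube2 R →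
      (x, z) ∈ cube2 R := by
    intro x y z hxy hyz
    have h1 : ((y, y) : X × X) ∈ closure ((fun F => F ((y, z) : X × X)) '' M2) :=
      distal_return M2 hM2c hM2comp hM2ne hM2d (y, y) (y, z) (horb y hyz)
    obtain ⟨u, hu, hul⟩ := mem_closure_iff_seq_limit.mp h1
    choose F hF hFu using hu
    choose i j n hg using hF
    have hu1 : ∀ k, u k = (σ (i k) (j k) y, σ (i k) (j k) (ρ (n k) z)) := by
      intro k; rw [← hFu k, hg k]
    -- extract a convergent subsequence of the first-coordinate images of x
    obtain ⟨x', -, φ, hφ, hax⟩ := isCompact_univ.tendsto_subseq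
      (x := fun k => σ (i k) (j k) x) (fun k => Set.mem_univ _)
    have hφt : Tendsto φ atTop atTop := hφ.tendsto_atTop
    have h2 : Tendsto (fun k => σ (i k) (j k) y) atTop (𝓝 y) := by
      have h := (continuous_fst.tendsto ((y, y) : X × X)).comp hul
      exact h.congr fun k => by simp [Function.comp, hu1 k]
    have h3 : Tendsto (fun k => σ (i k) (j k) (ρ (n k) z)) atTop (𝓝 y) := by
      have h := (continuous_snd.tendsto ((y, y) : X × X)).comp hul
      exact h.congr fun k => by simp [Function.comp, hu1 k]
    have hax' : Tendsto (fun k => σ (i (φ k)) (j (φ k)) x) atTop (𝓝 x') := by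
      exact hax
    have h2' : Tendsto (fun k => σ (i (φ k)) (j (φ k)) y) atTop (𝓝 y) := h2.comp hφt
    have h3' : Tendsto (fun k => σ (i (φ k)) (j (φ k)) (ρ (n (φ k)) z)) atTop (𝓝 y) :=
      h3.comp hφt
    -- (x', y) ∈ cube2 R
    have hx'y : ((x', y) : X × X) ∈ cube2 R := by
      refine hclosed.mem_of_tendsto (hax'.prodMk_nhds h2') ?_
      exact Filter.Eventually.of_forall fun k => inv_g _ _ _ _ hxy
    -- (x', y, y) ∈ orbit closure of (x, y, z) in the triple system
    have hq3 : ((x', y, y) : X × X × X) ∈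
        closure ((fun F => F ((x, y, z) : X × X × X)) '' M3) := by
      refine mem_closure_of_tendsto
        (f := fun k => g3 (i (φ k)) (j (φ k)) (n (φ k)) ((x, y, z) : X × X × X))
        ((hax'.prodMk_nhds (h2'.prodMk_nhds h3'))) ?_
      exact Filter.Eventually.of_forall fun k =>
        ⟨g3 (i (φ k)) (j (φ k)) (n (φ k)), ⟨_, _, _, rfl⟩, rfl⟩
    -- distality: come back
    have h4 : ((x, y, z) : X × X × X) ∈
        closure ((fun F => F ((x', y, y) : X × X × X)) '' M3) :=
      distal_return M3 hM3c hM3comp hM3ne hM3d _ _ hq3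
    obtain ⟨v, hv, hvl⟩ := mem_closure_iff_seq_limit.mp h4
    choose G hG hGv using hv
    choose i' j' m hg' using hG
    have hv1 : ∀ k, v k = (σ (i' k) (j' k) x', σ (i' k) (j' k) y,
        σ (i' k) (j' k) (ρ (m k) y)) := by
      intro k; rw [← hGv k, hg' k]
    have hw1 : Tendsto (fun k => σ (i' k) (j' k) x') atTop (𝓝 x) := by
      have h := (continuous_fst.tendsto ((x, y, z) : X × X × X)).comp hvl
      exact h.congr fun k => by simp [Function.comp, hv1 k]
    have hw3 : Tendsto (fun k => σ (i' k) (j' k) (ρ (m k) y)) atTop (𝓝 z) := by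
      have h := ((continuous_snd.comp continuous_snd).tendsto
        ((x, y, z) : X × X × X)).comp hvl
      exact h.congr fun k => by simp [Function.comp, hv1 k]
    refine hclosed.mem_of_tendsto (hw1.prodMk_nhds hw3) ?_
    refine Filter.Eventually.of_forall fun k => ?_
    exact inv_g (i' k) (j' k) _ _ (inv_R (m k) _ _ hx'y)
  refine ⟨main, hclosed, ?_, ?_, ?_⟩
  · intro x
    exact hcube2 ▸ subset_closure ⟨x, 0, rfl⟩
  · intro x y h
    refine mapsto Prod.swap continuous_swap ?_ _ h
    intro w n
    refine hcube2 ▸ subset_closure ⟨hpow R n w, -n, ?_⟩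
    show (hpow R n w, w) = _
    rw [hpow_add]
    simp [hpow_zero]
  · exact fun h h' => main _ _ _ h h'
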